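/- A [k, r_1, r_2, h_1, h_2, δ] hierarchical data-local maximally recoverable code has minimum distance exactly d = h_1 + h_2 + δ + 1. -/

import Mathlib

open Module

/-- The linear map restricting a word of length `n` to the coordinates in `E`
(puncturing on the complement of `E`). -/
def punctureTo (F : Type*) [Field F] {n : ℕ} (E : Finset (Fin n)) :
    (Fin n → F) →ₗ[F] (E → F) :=
  LinearMap.funLeft F F (fun j => (j : Fin n))

/-- A `[k, r₁, r₂, h₁, h₂, δ]` hierarchical data-local maximally recoverable code, with
`t₁ = k/r₁` middle groups `A i` of size `n₁ = r₁ + h₂ + t₂δ` and `t₂ = r₁/r₂` local groups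
`B i s ⊆ A i` of size `n₂ = r₂ + δ` each, length `n = k + h₁ + t₁(h₂ + t₂δ)`:
the code has dimension `k`, each local group carries `δ` local parities
(`dim C|_{B i s} ≤ r₂`), each middle group carries `h₂` further mid-level parities
(`dim C|_{A i} ≤ r₁`), and for every `E ⊆ [n]` of size `k + h₁` meeting each local group
in at most `r₂` coordinates and each middle group in exactly `r₁` coordinates, the
punctured code `C|_E` is a `[k+h₁, k, h₁+1]` MDS code. -/
structure IsHDLMRC (F : Type*) [Field F] [DecidableEq F]
    (k r1 r2 h1 h2 δ t1 t2 n : ℕ) where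
  C : Submodule F (Fin n → F)
  A : Fin t1 → Finset (Fin n)
  B : Fin t1 → Fin t2 → Finset (Fin n)
  hk : k = t1 * r1
  hr1 : r1 = t2 * r2
  hn : n = k + h1 + t1 * (h2 + t2 * δ)
  hA_card : ∀ i, (A i).card = r1 + h2 + t2 * δ
  hA_disj : ∀ i j, i ≠ j → Disjoint (A i) (A j)
  hB_sub : ∀ i s, B i s ⊆ A i
  hB_card : ∀ i s, (B i s).card = r2 + δ
  hB_disj : ∀ i s s', s ≠ s' → Disjoint (B i s) (B i s')
  hdim : finrank F C = k
  hloc : ∀ i s, finrank F (C.map (punctureTo F (B i s))) ≤ r2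
  hmid : ∀ i, finrank F (C.map (punctureTo F (A i))) ≤ r1
  hMR : ∀ E : Finset (Fin n), E.card = k + h1 →
    (∀ i s, (E ∩ B i s).card ≤ r2) → (∀ i, (E ∩ A i).card = r1) →
    finrank F (C.map (punctureTo F E)) = k ∧
      ∀ x ∈ C.map (punctureTo F E), x ≠ 0 → h1 + 1 ≤ hammingNorm x

section HDLMRCAux

variable {F : Type*} [Field F] {n : ℕ} (C : Submodule F (Fin n → F))

lemma HDLMRC.mem_kerP_iff (E : Finset (Fin n)) (x : C) :
    x ∈ LinearMap.ker ((punctureTo F E).domRestrict C) ↔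
      ∀ j ∈ E, (x : Fin n → F) j = 0 := by
  simp [LinearMap.mem_ker, punctureTo, funext_iff, Subtype.forall]

lemma HDLMRC.rank_nullity (E : Finset (Fin n)) :
    finrank F (C.map (punctureTo F E)) +
      finrank F (LinearMap.ker ((punctureTo F E).domRestrict C)) = finrank F C := by
  conv_rhs => rw [← LinearMap.finrank_range_add_finrank_ker ((punctureTo F E).domRestrict C)]
  rw [LinearMap.range_domRestrict]

lemma HDLMRC.kerP_union (E1 E2 : Finset (Fin n)) :
    LinearMap.ker ((punctureTo F (E1 ∪ E2)).domRestrict C)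
      = LinearMap.ker ((punctureTo F E1).domRestrict C)
        ⊓ LinearMap.ker ((punctureTo F E2).domRestrict C) := by
  ext x
  simp only [Submodule.mem_inf, HDLMRC.mem_kerP_iff, Finset.mem_union]
  exact ⟨fun h => ⟨fun j hj => h j (Or.inl hj), fun j hj => h j (Or.inr hj)⟩,
    fun h j hj => hj.elim (h.1 j) (h.2 j)⟩

lemma HDLMRC.rank_map_le_card (E : Finset (Fin n)) :
    finrank F (C.map (punctureTo F E)) ≤ E.card :=
  (Submodule.finrank_le _).trans
    (by rw [Module.finrank_fintype_fun_eq_card, Fintype.card_coe])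

lemma HDLMRC.rank_map_union (E1 E2 : Finset (Fin n)) :
    finrank F (C.map (punctureTo F (E1 ∪ E2))) ≤
      finrank F (C.map (punctureTo F E1)) + finrank F (C.map (punctureTo F E2)) := by
  have h1 := HDLMRC.rank_nullity C E1
  have h2 := HDLMRC.rank_nullity C E2
  have h12 := HDLMRC.rank_nullity C (E1 ∪ E2)
  rw [HDLMRC.kerP_union] at h12
  have hsup := Submodule.finrank_sup_add_finrank_inf_eq
    (LinearMap.ker ((punctureTo F E1).domRestrict C))
    (LinearMap.ker ((punctureTo F E2).domRestrict C))
  have hle : finrank F ↥(LinearMap.ker ((punctureTo F E1).domRestrict C)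
      ⊔ LinearMap.ker ((punctureTo F E2).domRestrict C)) ≤ finrank F C :=
    Submodule.finrank_le _
  omega

lemma HDLMRC.rank_map_biUnion {ι : Type*} [DecidableEq ι] (s : Finset ι)
    (P : ι → Finset (Fin n)) :
    finrank F (C.map (punctureTo F (s.biUnion P))) ≤
      ∑ i ∈ s, finrank F (C.map (punctureTo F (P i))) := by
  induction s using Finset.induction_on with
  | empty =>
    rw [Finset.biUnion_empty, Finset.sum_empty]
    exact (HDLMRC.rank_map_le_card C ∅).trans_eq Finset.card_empty
  | insert _ _ ha =>
      rename_i a s ih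
      rw [Finset.biUnion_insert, Finset.sum_insert ha]
      exact (HDLMRC.rank_map_union C _ _).trans (by omega)

end HDLMRCAux

lemma HDLMRC.sum_tsub_le {ι : Type*} (s : Finset ι) (f : ι → ℕ) (c : ℕ) :
    (∑ i ∈ s, (f i - c)) ≤ (∑ i ∈ s, f i) - c := by
  induction s using Finset.cons_induction with
  | empty => simp
  | cons a s ha ih => rw [Finset.sum_cons, Finset.sum_cons]; omega

lemma HDLMRC.exists_prio {α : Type*} [DecidableEq α] {X Y : Finset α} (hXY : X ⊆ Y) {m : ℕ}
    (hm : m ≤ Y.card) :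
    ∃ Z, Z ⊆ Y ∧ Z.card = m ∧ min m X.card ≤ (Z ∩ X).card := by
  obtain ⟨Z1, hZ1X, hZ1⟩ := Finset.exists_subset_card_eq (min_le_right m X.card)
  obtain ⟨Z, hZ1Z, hZY, hZ⟩ :=
    Finset.exists_subsuperset_card_eq (hZ1X.trans hXY) (by omega) hm
  refine ⟨Z, hZY, hZ, ?_⟩
  calc min m X.card = Z1.card := hZ1.symm
    _ ≤ (Z ∩ X).card := Finset.card_le_card (Finset.subset_inter hZ1Z hZ1X)

/-- In a middle group `Ai` (with local groups `Bi s`), one can select `t2 * r2` coordinates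
meeting each local group in at most `r2` coordinates while avoiding `min (h2+δ) |S ∩ Ai|`
elements of any given set `S`. -/
lemma HDLMRC.group_select {n : ℕ} {r2 δ h2 t2 : ℕ} (S Ai : Finset (Fin n))
    (Bi : Fin t2 → Finset (Fin n))
    (hsub : ∀ s, Bi s ⊆ Ai) (hBcard : ∀ s, (Bi s).card = r2 + δ)
    (hdisj : ∀ s s', s ≠ s' → Disjoint (Bi s) (Bi s'))
    (hAcard : Ai.card = t2 * r2 + h2 + t2 * δ) :
    ∃ Ei, Ei ⊆ Ai ∧ Ei.card = t2 * r2 ∧ (∀ s, (Ei ∩ Bi s).card ≤ r2) ∧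
      (Ei ∩ S).card ≤ (S ∩ Ai).card - (h2 + δ) := by
  -- choose δ skips in each local group, prioritizing support elements
  have hDs : ∀ s : Fin t2, ∃ D, D ⊆ Bi s ∧ D.card = δ ∧
      min δ (Bi s ∩ S).card ≤ (D ∩ (Bi s ∩ S)).card :=
    fun s => HDLMRC.exists_prio Finset.inter_subset_left (by rw [hBcard s]; omega)
  choose D hDsub hDcard hDS using hDs
  have hDS' : ∀ s, min δ (Bi s ∩ S).card ≤ (D s ∩ S).card := fun s =>
    (hDS s).trans (Finset.card_le_card (by
      intro j hj
      simp only [Finset.mem_inter] at hj ⊢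
      exact ⟨hj.1, hj.2.2⟩))
  set ZB : Finset (Fin n) := Finset.univ.biUnion D with hZB
  have hDdisj : ∀ x ∈ (Finset.univ : Finset (Fin t2)), ∀ y ∈ Finset.univ, x ≠ y →
      Disjoint (D x) (D y) :=
    fun x _ y _ hxy => (hdisj x y hxy).mono (hDsub x) (hDsub y)
  have hZBsub : ZB ⊆ Ai := Finset.biUnion_subset.mpr fun s _ => (hDsub s).trans (hsub s)
  have hZBcard : ZB.card = t2 * δ := by
    rw [hZB, Finset.card_biUnion hDdisj]
    simp [hDcard, Finset.sum_const, mul_comm]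
  -- choose h2 more skips, prioritizing remaining support elements
  obtain ⟨Zp, hZpsub, hZpcard, hZpS⟩ :=
    HDLMRC.exists_prio (X := (S ∩ Ai) \ ZB) (Y := Ai \ ZB)
      (Finset.sdiff_subset_sdiff Finset.inter_subset_right Finset.Subset.rfl)
      (m := h2) (by rw [Finset.card_sdiff_of_subset hZBsub, hAcard, hZBcard]; omega)
  set Z : Finset (Fin n) := ZB ∪ Zp with hZdef
  have hZpZB : Disjoint ZB Zp :=
    (Finset.sdiff_disjoint.mono_left hZpsub).symm
  have hZsub : Z ⊆ Ai := Finset.union_subset hZBsub (hZpsub.trans Finset.sdiff_subset)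
  have hZcard : Z.card = t2 * δ + h2 := by
    rw [hZdef, Finset.card_union_of_disjoint hZpZB, hZBcard, hZpcard]
  refine ⟨Ai \ Z, Finset.sdiff_subset, ?_, ?_, ?_⟩
  · rw [Finset.card_sdiff_of_subset hZsub, hAcard, hZcard]; omega
  · intro s
    have hss : (Ai \ Z) ∩ Bi s ⊆ Bi s \ D s := by
      intro j hj
      simp only [Finset.mem_inter, Finset.mem_sdiff] at hj ⊢
      exact ⟨hj.2, fun hD => hj.1.2 (Finset.mem_union_left _
        (Finset.mem_biUnion.mpr ⟨s, Finset.mem_univ s, hD⟩))⟩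
    calc ((Ai \ Z) ∩ Bi s).card ≤ (Bi s \ D s).card := Finset.card_le_card hss
      _ = r2 := by rw [Finset.card_sdiff_of_subset (hDsub s), hBcard s, hDcard s]; omega
  · -- the support bound
    have hZBS_sub : ZB ∩ S ⊆ S ∩ Ai := by
      intro j hj
      simp only [Finset.mem_inter] at hj ⊢
      exact ⟨hj.2, hZBsub hj.1⟩
    have hzb_le : (ZB ∩ S).card ≤ (S ∩ Ai).card := Finset.card_le_card hZBS_sub
    have hsd : ((S ∩ Ai) \ ZB).card = (S ∩ Ai).card - (ZB ∩ S).card := by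
      have h1 : ((S ∩ Ai) \ ZB).card + ((S ∩ Ai) ∩ ZB).card = (S ∩ Ai).card :=
        Finset.card_sdiff_add_card_inter _ _
      have h2 : (S ∩ Ai) ∩ ZB = ZB ∩ S := by
        ext j
        simp only [Finset.mem_inter]
        exact ⟨fun h => ⟨h.2, h.1.1⟩, fun h => ⟨⟨h.2, hZBsub h.1⟩, h.1⟩⟩
      rw [h2] at h1
      omega
    have hZpS' : min h2 ((S ∩ Ai).card - (ZB ∩ S).card) ≤ (Zp ∩ S).card := by
      rw [← hsd]
      exact hZpS.trans (Finset.card_le_card (by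
        intro j hj
        simp only [Finset.mem_inter, Finset.mem_sdiff] at hj ⊢
        exact ⟨hj.1, hj.2.1.1⟩))
    have hZS : (Z ∩ S).card = (ZB ∩ S).card + (Zp ∩ S).card := by
      rw [hZdef, Finset.union_inter_distrib_right,
        Finset.card_union_of_disjoint (hZpZB.mono Finset.inter_subset_left
          Finset.inter_subset_left)]
    -- key : Z covers at least min (h2+δ) |S ∩ Ai| support elements
    have key : min (h2 + δ) ((S ∩ Ai).card) ≤ (Z ∩ S).card := by
      by_cases hcase : ∃ s, δ ≤ (Bi s ∩ S).card
      · obtain ⟨s, hs⟩ := hcase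
        have h1 : δ ≤ (D s ∩ S).card := by have := hDS' s; omega
        have h2 : (D s ∩ S).card ≤ (ZB ∩ S).card :=
          Finset.card_le_card (by
            intro j hj
            simp only [Finset.mem_inter, hZB, Finset.mem_biUnion] at hj ⊢
            exact ⟨⟨s, Finset.mem_univ s, hj.1⟩, hj.2⟩)
        omega
      · push_neg at hcase
        have hZBS : (ZB ∩ S).card = ∑ s : Fin t2, (D s ∩ S).card := by
          have : ZB ∩ S = Finset.univ.biUnion (fun s => D s ∩ S) := by
            rw [hZB]; ext j
            simp only [Finset.mem_inter, Finset.mem_biUnion]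
            tauto
          rw [this, Finset.card_biUnion (fun x _ y _ hxy =>
            ((hDdisj x (Finset.mem_univ x) y (Finset.mem_univ y) hxy).mono
              Finset.inter_subset_left Finset.inter_subset_left))]
        have hsum : ∑ s : Fin t2, (Bi s ∩ S).card ≤ ∑ s : Fin t2, (D s ∩ S).card := by
          refine Finset.sum_le_sum fun s _ => ?_
          have := hDS' s
          have := hcase s
          omega
        set UB : Finset (Fin n) := Finset.univ.biUnion Bi with hUB
        have hUBsub : UB ⊆ Ai := Finset.biUnion_subset.mpr fun s _ => hsub s
        have hUBcard : UB.card = t2 * (r2 + δ) := by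
          rw [hUB, Finset.card_biUnion (fun x _ y _ hxy => hdisj x y hxy)]
          simp [hBcard, Finset.sum_const, mul_comm]
        have hUBS : (UB ∩ S).card = ∑ s : Fin t2, (Bi s ∩ S).card := by
          have : UB ∩ S = Finset.univ.biUnion (fun s => Bi s ∩ S) := by
            rw [hUB]; ext j
            simp only [Finset.mem_inter, Finset.mem_biUnion]
            tauto
          rw [this, Finset.card_biUnion (fun x _ y _ hxy =>
            ((hdisj x y hxy).mono Finset.inter_subset_left Finset.inter_subset_left))]
        have hsplit : S ∩ Ai ⊆ ((S ∩ Ai) \ UB) ∪ (UB ∩ S) := by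
          intro j hj
          simp only [Finset.mem_union, Finset.mem_sdiff, Finset.mem_inter] at hj ⊢
          by_cases hju : j ∈ UB
          · exact Or.inr ⟨hju, hj.1⟩
          · exact Or.inl ⟨hj, hju⟩
        have hout : ((S ∩ Ai) \ UB).card ≤ h2 := by
          have h1 : (S ∩ Ai) \ UB ⊆ Ai \ UB :=
            Finset.sdiff_subset_sdiff Finset.inter_subset_right Finset.Subset.rfl
          have h2 : (Ai \ UB).card = h2 := by
            rw [Finset.card_sdiff_of_subset hUBsub, hAcard, hUBcard]
            have : t2 * (r2 + δ) = t2 * r2 + t2 * δ := by ring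
            omega
          exact (Finset.card_le_card h1).trans h2.le
        have hcards : (S ∩ Ai).card ≤ ((S ∩ Ai) \ UB).card + (UB ∩ S).card :=
          (Finset.card_le_card hsplit).trans (Finset.card_union_le _ _)
        omega
    have hfinal : ((Ai \ Z) ∩ S).card = (S ∩ Ai).card - (Z ∩ S).card := by
      have h1 : (Ai \ Z) ∩ S = (S ∩ Ai) \ Z := by
        ext j
        simp only [Finset.mem_inter, Finset.mem_sdiff]
        tauto
      have h2 : ((S ∩ Ai) \ Z).card + ((S ∩ Ai) ∩ Z).card = (S ∩ Ai).card :=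
        Finset.card_sdiff_add_card_inter _ _
      have h3 : (S ∩ Ai) ∩ Z = Z ∩ S := by
        ext j
        simp only [Finset.mem_inter]
        exact ⟨fun h => ⟨h.2, h.1.1⟩, fun h => ⟨⟨h.2, hZsub h.1⟩, h.1⟩⟩
      rw [h3] at h2
      rw [h1]
      omega
    omega

lemma HDLMRC.hammingNorm_eq_card {F : Type*} [Field F] [DecidableEq F]
    {ι : Type*} [Fintype ι] (c : ι → F) :
    hammingNorm c = (Finset.univ.filter fun j => c j ≠ 0).card := by
  unfold hammingNorm
  congr 1

lemma HDLMRC.hammingNorm_punctureTo {F : Type*} [Field F] [DecidableEq F] {n : ℕ}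
    (E : Finset (Fin n)) (c : Fin n → F) :
    hammingNorm (punctureTo F E c) = (E.filter fun j => c j ≠ 0).card := by
  rw [HDLMRC.hammingNorm_eq_card]
  refine Finset.card_bij (fun a _ => a.1) ?_ ?_ ?_
  · intro a ha
    simp only [Finset.mem_filter, Finset.mem_univ, true_and] at ha
    simp only [Finset.mem_filter]
    exact ⟨a.2, ha⟩
  · intro a _ b _ h
    exact Subtype.ext h
  · intro b hb
    simp only [Finset.mem_filter] at hb
    exact ⟨⟨b, hb.1⟩, by rw [Finset.mem_filter]; exact ⟨Finset.mem_univ _, hb.2⟩, rfl⟩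

set_option maxHeartbeats 2000000 in
/-- **Minimum distance of HDL-MRC.** A `[k, r₁, r₂, h₁, h₂, δ]` hierarchical data-local
maximally recoverable code has minimum distance exactly `d = h₁ + h₂ + δ + 1`. -/
theorem hdlmrc_minimum_distance
    (F : Type*) [Field F] [DecidableEq F]
    (k r1 r2 h1 h2 δ t1 t2 n : ℕ)
    (hk : 0 < k) (hr2 : 0 < r2) (hδ : 0 < δ) (ht1 : 0 < t1) (ht2 : 0 < t2)
    (X : IsHDLMRC F k r1 r2 h1 h2 δ t1 t2 n) :
    (∀ c ∈ X.C, c ≠ 0 → h1 + h2 + δ + 1 ≤ hammingNorm c) ∧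
      ∃ c ∈ X.C, c ≠ 0 ∧ hammingNorm c = h1 + h2 + δ + 1 := by
  obtain ⟨m1, rfl⟩ : ∃ m, t1 = m + 1 := ⟨t1 - 1, by omega⟩
  obtain ⟨m2, rfl⟩ : ∃ m, t2 = m + 1 := ⟨t2 - 1, by omega⟩
  obtain ⟨m3, rfl⟩ : ∃ m, r2 = m + 1 := ⟨r2 - 1, by omega⟩
  -- the lower bound on the weight of every nonzero codeword
  have lower : ∀ c ∈ X.C, c ≠ 0 → h1 + h2 + δ + 1 ≤ hammingNorm c := by
    intro c hc hc0
    by_contra hlt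
    push_neg at hlt
    set S : Finset (Fin n) := Finset.univ.filter (fun j => c j ≠ 0) with hS
    have hScard : S.card ≤ h1 + h2 + δ := by
      have := HDLMRC.hammingNorm_eq_card c
      rw [← hS] at this
      omega
    have hsel : ∀ i, ∃ Ei, Ei ⊆ X.A i ∧ Ei.card = (m2 + 1) * (m3 + 1) ∧
        (∀ s, (Ei ∩ X.B i s).card ≤ m3 + 1) ∧
        (Ei ∩ S).card ≤ (S ∩ X.A i).card - (h2 + δ) := fun i =>
      HDLMRC.group_select S (X.A i) (X.B i) (X.hB_sub i) (X.hB_card i) (X.hB_disj i)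
        (by rw [X.hA_card i, X.hr1])
    choose Ei hEsub hEcard hEB hES using hsel
    set E : Finset (Fin n) :=
      (Finset.univ.biUnion X.A)ᶜ ∪ Finset.univ.biUnion Ei with hE
    have hmemE : ∀ j, j ∈ E ↔ ((¬ ∃ i, j ∈ X.A i) ∨ ∃ i, j ∈ Ei i) := by
      intro j
      simp [hE, Finset.mem_union, Finset.mem_compl, Finset.mem_biUnion]
    have hUAcard : (Finset.univ.biUnion X.A).card = (m1 + 1) * (r1 + h2 + (m2 + 1) * δ) := by
      rw [Finset.card_biUnion (fun x _ y _ h => X.hA_disj x y h)]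
      simp [X.hA_card, Finset.sum_const, mul_comm]
    have hOutcard : ((Finset.univ.biUnion X.A)ᶜ).card = h1 := by
      rw [Finset.card_compl, Fintype.card_fin, hUAcard]
      have e1 := X.hn
      have e2 := X.hk
      have e3 : (m1 + 1) * (r1 + h2 + (m2 + 1) * δ)
          = (m1 + 1) * r1 + (m1 + 1) * (h2 + (m2 + 1) * δ) := by ring
      omega
    have hEidisj : ∀ x ∈ (Finset.univ : Finset (Fin (m1 + 1))), ∀ y ∈ Finset.univ,
        x ≠ y → Disjoint (Ei x) (Ei y) :=
      fun x _ y _ h => (X.hA_disj x y h).mono (hEsub x) (hEsub y)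
    have hOutUB : Disjoint ((Finset.univ.biUnion X.A)ᶜ) (Finset.univ.biUnion Ei) := by
      refine Finset.disjoint_left.mpr fun j hj hj2 => ?_
      simp only [Finset.mem_compl] at hj
      obtain ⟨i, _, hji⟩ := Finset.mem_biUnion.mp hj2
      exact hj (Finset.mem_biUnion.mpr ⟨i, Finset.mem_univ i, hEsub i hji⟩)
    have hEcard' : E.card = k + h1 := by
      rw [hE, Finset.card_union_of_disjoint hOutUB, hOutcard, Finset.card_biUnion hEidisj]
      have e1 : ∑ i : Fin (m1 + 1), (Ei i).card = (m1 + 1) * ((m2 + 1) * (m3 + 1)) := by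
        simp [hEcard, Finset.sum_const, mul_comm]
      rw [e1, ← X.hr1, ← X.hk]
      omega
    have hEAi : ∀ i, E ∩ X.A i = Ei i := by
      intro i
      ext j
      rw [Finset.mem_inter, hmemE j]
      constructor
      · rintro ⟨hj1 | ⟨i', hji'⟩, hjA⟩
        · exact absurd ⟨i, hjA⟩ hj1
        · rcases eq_or_ne i' i with rfl | hne
          · exact hji'
          · exact absurd hjA (Finset.disjoint_left.mp (X.hA_disj i' i hne) (hEsub i' hji'))
      · intro hj
        exact ⟨Or.inr ⟨i, hj⟩, hEsub i hj⟩
    have hEA' : ∀ i, (E ∩ X.A i).card = r1 := by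
      intro i
      rw [hEAi i, hEcard i, ← X.hr1]
    have hEB' : ∀ i s, (E ∩ X.B i s).card ≤ m3 + 1 := by
      intro i s
      have hsub2 : E ∩ X.B i s ⊆ Ei i ∩ X.B i s := by
        intro j hj
        rw [Finset.mem_inter] at hj ⊢
        refine ⟨?_, hj.2⟩
        rw [← hEAi i, Finset.mem_inter]
        exact ⟨hj.1, X.hB_sub i s hj.2⟩
      exact (Finset.card_le_card hsub2).trans (hEB i s)
    obtain ⟨hdimE, hminE⟩ := X.hMR E hEcard' hEB' hEA'
    -- puncturing to E is injective on the code
    have hrn := HDLMRC.rank_nullity X.C E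
    have hker0 : LinearMap.ker ((punctureTo F E).domRestrict X.C) = ⊥ := by
      have hdimC := X.hdim
      have : finrank F (LinearMap.ker ((punctureTo F E).domRestrict X.C)) = 0 := by omega
      exact Submodule.finrank_eq_zero.mp this
    have hxne : punctureTo F E c ≠ 0 := by
      intro h0
      have hmem : (⟨c, hc⟩ : X.C) ∈ LinearMap.ker ((punctureTo F E).domRestrict X.C) := by
        rw [LinearMap.mem_ker, LinearMap.domRestrict_apply]
        exact h0
      rw [hker0, Submodule.mem_bot] at hmem
      exact hc0 (by simpa using congrArg Subtype.val hmem)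
    have hwt := hminE (punctureTo F E c) (Submodule.mem_map_of_mem hc) hxne
    -- but the weight of the punctured word is at most h1
    have hwt2 : hammingNorm (punctureTo F E c) = (E ∩ S).card := by
      rw [HDLMRC.hammingNorm_punctureTo]
      congr 1
      ext j
      simp only [Finset.mem_filter, Finset.mem_inter, hS, Finset.mem_univ, true_and]
    have hsplitE : E ∩ S ⊆ ((Finset.univ.biUnion X.A)ᶜ ∩ S)
        ∪ Finset.univ.biUnion (fun i => Ei i ∩ S) := by
      intro j hj
      rw [Finset.mem_inter, hmemE j] at hj
      rcases hj.1 with h | ⟨i, hi⟩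
      · refine Finset.mem_union_left _ (Finset.mem_inter.mpr ⟨?_, hj.2⟩)
        rw [Finset.mem_compl]
        intro hmem
        obtain ⟨i, _, hji⟩ := Finset.mem_biUnion.mp hmem
        exact h ⟨i, hji⟩
      · exact Finset.mem_union_right _
          (Finset.mem_biUnion.mpr ⟨i, Finset.mem_univ i, Finset.mem_inter.mpr ⟨hi, hj.2⟩⟩)
    have hOS : ((Finset.univ.biUnion X.A)ᶜ ∩ S).card ≤ h1 :=
      (Finset.card_le_card Finset.inter_subset_left).trans hOutcard.le
    have hsum1 : ∑ i : Fin (m1 + 1), (Ei i ∩ S).card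
        ≤ ∑ i : Fin (m1 + 1), ((S ∩ X.A i).card - (h2 + δ)) :=
      Finset.sum_le_sum fun i _ => hES i
    have hsum2 : ∑ i : Fin (m1 + 1), ((S ∩ X.A i).card - (h2 + δ))
        ≤ (∑ i : Fin (m1 + 1), (S ∩ X.A i).card) - (h2 + δ) :=
      HDLMRC.sum_tsub_le _ _ _
    have hSA : (S ∩ Finset.univ.biUnion X.A).card
        = ∑ i : Fin (m1 + 1), (S ∩ X.A i).card := by
      rw [Finset.inter_biUnion, Finset.card_biUnion (fun x _ y _ h =>
        (X.hA_disj x y h).mono Finset.inter_subset_right Finset.inter_subset_right)]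
    have hSpart : (S ∩ Finset.univ.biUnion X.A).card
        + ((Finset.univ.biUnion X.A)ᶜ ∩ S).card = S.card := by
      have e1 : (Finset.univ.biUnion X.A)ᶜ ∩ S = S \ Finset.univ.biUnion X.A := by
        rw [Finset.inter_comm]
        exact sdiff_eq.symm
      rw [e1]
      exact Finset.card_inter_add_card_sdiff _ _
    have hbiu : (Finset.univ.biUnion fun i => Ei i ∩ S).card
        ≤ ∑ i : Fin (m1 + 1), (Ei i ∩ S).card := Finset.card_biUnion_le
    have hEScard : (E ∩ S).card ≤ h1 := by
      have h1' := (Finset.card_le_card hsplitE).trans (Finset.card_union_le _ _)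
      omega
    omega
  refine ⟨lower, ?_⟩
  -- construct a codeword of weight exactly h1 + h2 + δ + 1
  set i0 : Fin (m1 + 1) := 0 with hi0
  set s0 : Fin (m2 + 1) := 0 with hs0
  obtain ⟨D, hDsub, hDcard⟩ :=
    Finset.exists_subset_card_eq (s := X.B i0 s0) (n := δ + 1)
      (by rw [X.hB_card]; omega)
  set Q : Fin (m2 + 1) → Finset (Fin n) :=
    fun s => if s = s0 then X.B i0 s0 \ D else X.B i0 s with hQ
  set P : Fin (m1 + 1) → Finset (Fin n) :=
    fun i => if i = i0 then Finset.univ.biUnion Q else X.A i with hP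
  set T : Finset (Fin n) := Finset.univ.biUnion P with hT
  have hQsub : ∀ s, Q s ⊆ X.B i0 s := by
    intro s
    rw [hQ]
    dsimp only
    rcases eq_or_ne s s0 with rfl | h
    · rw [if_pos rfl]; exact Finset.sdiff_subset
    · rw [if_neg h]
  have hPsub : ∀ i, P i ⊆ X.A i := by
    intro i
    rw [hP]
    dsimp only
    rcases eq_or_ne i i0 with rfl | h
    · rw [if_pos rfl]
      exact Finset.biUnion_subset.mpr fun s _ => (hQsub s).trans (X.hB_sub i0 s)
    · rw [if_neg h]
  -- cardinalities
  have hQcard0 : (Q s0).card = m3 := by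
    rw [hQ]
    dsimp only
    rw [if_pos rfl, Finset.card_sdiff_of_subset hDsub, X.hB_card, hDcard]
    omega
  have hQcard : ∀ s, s ≠ s0 → (Q s).card = m3 + 1 + δ := by
    intro s h
    rw [hQ]
    dsimp only
    rw [if_neg h, X.hB_card]
  have hQdisj : ∀ x ∈ (Finset.univ : Finset (Fin (m2 + 1))), ∀ y ∈ Finset.univ,
      x ≠ y → Disjoint (Q x) (Q y) :=
    fun x _ y _ h => (X.hB_disj i0 x y h).mono (hQsub x) (hQsub y)
  have hT1card : (Finset.univ.biUnion Q).card = m3 + m2 * (m3 + 1 + δ) := by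
    rw [Finset.card_biUnion hQdisj,
      ← Finset.add_sum_erase Finset.univ (fun s => (Q s).card) (Finset.mem_univ s0),
      hQcard0]
    have e1 : ∑ s ∈ Finset.univ.erase s0, (Q s).card
        = ∑ s ∈ Finset.univ.erase s0, (m3 + 1 + δ) :=
      Finset.sum_congr rfl fun s hs => hQcard s (Finset.ne_of_mem_erase hs)
    rw [e1, Finset.sum_const, Finset.card_erase_of_mem (Finset.mem_univ s0),
      Finset.card_univ, Fintype.card_fin, smul_eq_mul]
    simp
  have hPdisj : ∀ x ∈ (Finset.univ : Finset (Fin (m1 + 1))), ∀ y ∈ Finset.univ,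
      x ≠ y → Disjoint (P x) (P y) :=
    fun x _ y _ h => (X.hA_disj x y h).mono (hPsub x) (hPsub y)
  have hTcard : T.card = (m3 + m2 * (m3 + 1 + δ)) + m1 * (r1 + h2 + (m2 + 1) * δ) := by
    rw [hT, Finset.card_biUnion hPdisj,
      ← Finset.add_sum_erase Finset.univ (fun i => (P i).card) (Finset.mem_univ i0)]
    have e0 : (P i0).card = m3 + m2 * (m3 + 1 + δ) := by
      rw [hP]; dsimp only; rw [if_pos rfl]; exact hT1card
    have e1 : ∑ i ∈ Finset.univ.erase i0, (P i).card
        = ∑ i ∈ Finset.univ.erase i0, (r1 + h2 + (m2 + 1) * δ) := by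
      refine Finset.sum_congr rfl fun i hi => ?_
      rw [hP]; dsimp only
      rw [if_neg (Finset.ne_of_mem_erase hi)]
      exact X.hA_card i
    rw [e0, e1, Finset.sum_const, Finset.card_erase_of_mem (Finset.mem_univ i0),
      Finset.card_univ, Fintype.card_fin, smul_eq_mul]
    simp
  -- rank bound for the punctured code on T
  have hrkQ0 : finrank F (X.C.map (punctureTo F (Q s0))) ≤ m3 :=
    (HDLMRC.rank_map_le_card X.C (Q s0)).trans hQcard0.le
  have hrkT1 : finrank F (X.C.map (punctureTo F (Finset.univ.biUnion Q)))
      ≤ m3 + m2 * (m3 + 1) := by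
    refine (HDLMRC.rank_map_biUnion X.C Finset.univ Q).trans ?_
    rw [← Finset.add_sum_erase Finset.univ
      (fun s => finrank F (X.C.map (punctureTo F (Q s)))) (Finset.mem_univ s0)]
    have e1 : ∑ s ∈ Finset.univ.erase s0, finrank F (X.C.map (punctureTo F (Q s)))
        ≤ ∑ s ∈ Finset.univ.erase s0, (m3 + 1) := by
      refine Finset.sum_le_sum fun s hs => ?_
      have : Q s = X.B i0 s := by
        rw [hQ]; dsimp only; rw [if_neg (Finset.ne_of_mem_erase hs)]
      rw [this]
      exact X.hloc i0 s
    have e2 : ∑ s ∈ Finset.univ.erase s0, (m3 + 1) = m2 * (m3 + 1) := by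
      rw [Finset.sum_const, Finset.card_erase_of_mem (Finset.mem_univ s0),
        Finset.card_univ, Fintype.card_fin, smul_eq_mul]
      simp
    omega
  have hrkT : finrank F (X.C.map (punctureTo F T)) + 1 ≤ k := by
    have h0 : finrank F (X.C.map (punctureTo F T))
        ≤ (m3 + m2 * (m3 + 1)) + m1 * r1 := by
      rw [hT]
      refine (HDLMRC.rank_map_biUnion X.C Finset.univ P).trans ?_
      rw [← Finset.add_sum_erase Finset.univ
        (fun i => finrank F (X.C.map (punctureTo F (P i)))) (Finset.mem_univ i0)]
      have e0 : finrank F (X.C.map (punctureTo F (P i0))) ≤ m3 + m2 * (m3 + 1) := by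
        have : P i0 = Finset.univ.biUnion Q := by
          rw [hP]; dsimp only; rw [if_pos rfl]
        rw [this]
        exact hrkT1
      have e1 : ∑ i ∈ Finset.univ.erase i0, finrank F (X.C.map (punctureTo F (P i)))
          ≤ ∑ i ∈ Finset.univ.erase i0, r1 := by
        refine Finset.sum_le_sum fun i hi => ?_
        have : P i = X.A i := by
          rw [hP]; dsimp only; rw [if_neg (Finset.ne_of_mem_erase hi)]
        rw [this]
        exact X.hmid i
      have e2 : ∑ i ∈ Finset.univ.erase i0, r1 = m1 * r1 := by
        rw [Finset.sum_const, Finset.card_erase_of_mem (Finset.mem_univ i0),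
          Finset.card_univ, Fintype.card_fin, smul_eq_mul]
        simp
      omega
    have hkey : (m3 + m2 * (m3 + 1)) + m1 * r1 + 1 = k := by
      rw [X.hk, X.hr1]
      ring
    omega
  -- a nonzero codeword vanishing on T
  have hrn := HDLMRC.rank_nullity X.C T
  rw [X.hdim] at hrn
  have hkerne : LinearMap.ker ((punctureTo F T).domRestrict X.C) ≠ ⊥ := by
    intro hbot
    rw [hbot, finrank_bot] at hrn
    omega
  obtain ⟨x, hxker, hx0⟩ := (Submodule.ne_bot_iff _).mp hkerne
  refine ⟨(x : Fin n → F), x.2, ?_, ?_⟩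
  · intro h
    exact hx0 (Subtype.ext h)
  · have hvan : ∀ j ∈ T, (x : Fin n → F) j = 0 := (HDLMRC.mem_kerP_iff X.C T x).mp hxker
    have hsupp : (Finset.univ.filter fun j => (x : Fin n → F) j ≠ 0) ⊆ Tᶜ := by
      intro j hj
      simp only [Finset.mem_filter, Finset.mem_univ, true_and] at hj
      exact Finset.mem_compl.mpr fun hjT => hj (hvan j hjT)
    have hwle : hammingNorm (x : Fin n → F) ≤ h1 + h2 + δ + 1 := by
      rw [HDLMRC.hammingNorm_eq_card]
      have hTn : T.card + (h1 + h2 + δ + 1) = n := by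
        rw [hTcard, X.hn, X.hk, X.hr1]
        ring
      calc (Finset.univ.filter fun j => (x : Fin n → F) j ≠ 0).card
          ≤ Tᶜ.card := Finset.card_le_card hsupp
        _ = n - T.card := by rw [Finset.card_compl, Fintype.card_fin]
        _ ≤ h1 + h2 + δ + 1 := by omega
    exact le_antisymm hwle (lower _ x.2 fun h => hx0 (Subtype.ext h))
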